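/- Let A₂, A₃, B₂, B₃ > 0 and d₂⁰, d₃⁰ > 0 be reals with (B₂/2)·exp(−2d₂⁰) = (B₃/2)·exp(−2d₃⁰) =: v₁⁰, define f_j(t) = (A_j/4)·(2t + sinh(2t)) and d_j(v) = −(1/2)·log(2v/B_j) for j = 2, 3, set ṽ_j⁰ = (A_j/4)·(1 + cosh(2d_j⁰)) and assume ṽ₂⁰ ≥ ṽ₃⁰. Define V on (0, ∞) by V(v₁) = v₁ + f₂(d₂(v₁)) + f₃(d₃⁰ + d₂⁰ − d₂(v₁)) for v₁ ≤ v₁⁰, and V(v₁) = v₁ + f₂(d₂(v₁)) + f₃(d₃(v₁)) for v₁ ≥ v₁⁰. Then V has a local maximum at v₁⁰ (V(v₁) ≤ V(v₁⁰) for all v₁ > 0 in some neighbourhood of v₁⁰) if and only if the strict triangular inequalities ṽ₂⁰ − ṽ₃⁰ < v₁⁰ < ṽ₂⁰ + ṽ₃⁰ hold. -/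

import Mathlib

set_option maxHeartbeats 1000000

/-- Case III of the main theorem (one cusp and two boundary components): the total
peripheral volume `V` has a local maximum at `v₁⁰` (among positive parameters) iff the
strict triangular inequalities `vt₂⁰ − vt₃⁰ < v₁⁰ < vt₂⁰ + vt₃⁰` hold. -/
theorem caseIII_localMax_iff_triangular (A₂ A₃ B₂ B₃ d₂ d₃ v₁ vt₂ vt₃ : ℝ)
    (hA₂ : 0 < A₂) (hA₃ : 0 < A₃) (hB₂ : 0 < B₂) (hB₃ : 0 < B₃)
    (hd₂ : 0 < d₂) (hd₃ : 0 < d₃)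
    (hv₁₂ : v₁ = B₂ / 2 * Real.exp (-2 * d₂))
    (hv₁₃ : v₁ = B₃ / 2 * Real.exp (-2 * d₃))
    (f₂ f₃ dd₂ dd₃ : ℝ → ℝ)
    (hf₂ : ∀ t, f₂ t = A₂ / 4 * (2 * t + Real.sinh (2 * t)))
    (hf₃ : ∀ t, f₃ t = A₃ / 4 * (2 * t + Real.sinh (2 * t)))
    (hdd₂ : ∀ v, dd₂ v = -(1 / 2) * Real.log (2 * v / B₂))
    (hdd₃ : ∀ v, dd₃ v = -(1 / 2) * Real.log (2 * v / B₃))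
    (hvt₂ : vt₂ = A₂ / 4 * (1 + Real.cosh (2 * d₂)))
    (hvt₃ : vt₃ = A₃ / 4 * (1 + Real.cosh (2 * d₃)))
    (hord : vt₃ ≤ vt₂)
    (V : ℝ → ℝ)
    (hVle : ∀ v, 0 < v → v ≤ v₁ → V v = v + f₂ (dd₂ v) + f₃ (d₃ + d₂ - dd₂ v))
    (hVge : ∀ v, v₁ ≤ v → V v = v + f₂ (dd₂ v) + f₃ (dd₃ v)) :
    IsLocalMaxOn V (Set.Ioi (0 : ℝ)) v₁ ↔ (vt₂ - vt₃ < v₁ ∧ v₁ < vt₂ + vt₃) := by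
  have hv₁ : 0 < v₁ := by
    rw [hv₁₂]; positivity
  have hB₂' : B₂ ≠ 0 := hB₂.ne'
  have hB₃' : B₃ ≠ 0 := hB₃.ne'
  have hv₁' : v₁ ≠ 0 := hv₁.ne'
  -- abbreviations for the two depth functions
  obtain ⟨D2, hD2def⟩ : ∃ g : ℝ → ℝ, g = fun v => -(1 / 2) * Real.log (2 * v / B₂) := ⟨_, rfl⟩
  obtain ⟨D3, hD3def⟩ : ∃ g : ℝ → ℝ, g = fun v => -(1 / 2) * Real.log (2 * v / B₃) := ⟨_, rfl⟩
  -- the two branches of V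
  obtain ⟨Lf, hLfdef⟩ : ∃ g : ℝ → ℝ, g = fun v => v
      + A₂ / 4 * (2 * D2 v + Real.sinh (2 * D2 v))
      + A₃ / 4 * (2 * (d₃ + d₂ - D2 v) + Real.sinh (2 * (d₃ + d₂ - D2 v))) := ⟨_, rfl⟩
  obtain ⟨Rf, hRfdef⟩ : ∃ g : ℝ → ℝ, g = fun v => v
      + A₂ / 4 * (2 * D2 v + Real.sinh (2 * D2 v))
      + A₃ / 4 * (2 * D3 v + Real.sinh (2 * D3 v)) := ⟨_, rfl⟩
  -- their derivatives
  obtain ⟨LDf, hLDdef⟩ : ∃ g : ℝ → ℝ, g = fun v => 1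
      + A₂ / 2 * (1 + Real.cosh (2 * D2 v)) * (-(1 / (2 * v)))
      + A₃ / 2 * (1 + Real.cosh (2 * (d₃ + d₂ - D2 v))) * (1 / (2 * v)) := ⟨_, rfl⟩
  obtain ⟨RDf, hRDdef⟩ : ∃ g : ℝ → ℝ, g = fun v => 1
      + A₂ / 2 * (1 + Real.cosh (2 * D2 v)) * (-(1 / (2 * v)))
      + A₃ / 2 * (1 + Real.cosh (2 * D3 v)) * (-(1 / (2 * v))) := ⟨_, rfl⟩
  -- V agrees with the branches
  have hVL : ∀ v : ℝ, 0 < v → v ≤ v₁ → V v = Lf v := by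
    intro v h1 h2
    rw [hVle v h1 h2, hf₂, hf₃, hdd₂]
    simp only [hLfdef, hD2def]
  have hVR : ∀ v : ℝ, v₁ ≤ v → V v = Rf v := by
    intro v hle
    rw [hVge v hle, hf₂, hf₃, hdd₂, hdd₃]
    simp only [hRfdef, hD2def, hD3def]
  -- derivatives of the depth functions
  have hD2deriv : ∀ x : ℝ, 0 < x → HasDerivAt D2 (-(1 / (2 * x))) x := by
    intro x hx
    rw [hD2def]
    have h0 : HasDerivAt (fun v : ℝ => 2 * v / B₂) (2 / B₂) x := by
      simpa using ((hasDerivAt_id x).const_mul (2 : ℝ)).div_const B₂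
    have hne : 2 * x / B₂ ≠ 0 := by positivity
    have h1 : HasDerivAt (fun v : ℝ => Real.log (2 * v / B₂)) (2 / B₂ / (2 * x / B₂)) x :=
      h0.log hne
    have h2 := h1.const_mul (-(1 / 2) : ℝ)
    convert h2 using 1
    · rfl
    · rfl
    · field_simp
  have hD3deriv : ∀ x : ℝ, 0 < x → HasDerivAt D3 (-(1 / (2 * x))) x := by
    intro x hx
    rw [hD3def]
    have h0 : HasDerivAt (fun v : ℝ => 2 * v / B₃) (2 / B₃) x := by
      simpa using ((hasDerivAt_id x).const_mul (2 : ℝ)).div_const B₃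
    have hne : 2 * x / B₃ ≠ 0 := by positivity
    have h1 : HasDerivAt (fun v : ℝ => Real.log (2 * v / B₃)) (2 / B₃ / (2 * x / B₃)) x :=
      h0.log hne
    have h2 := h1.const_mul (-(1 / 2) : ℝ)
    convert h2 using 1
    · rfl
    · rfl
    · field_simp
  -- derivative of the left branch
  have hLder : ∀ x : ℝ, 0 < x → HasDerivAt Lf (LDf x) x := by
    intro x hx
    have hD := hD2deriv x hx
    have h2D : HasDerivAt (fun v : ℝ => 2 * D2 v) (2 * (-(1 / (2 * x)))) x := hD.const_mul 2
    have hsh : HasDerivAt (fun v : ℝ => Real.sinh (2 * D2 v))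
        (Real.cosh (2 * D2 x) * (2 * (-(1 / (2 * x))))) x := h2D.sinh
    have p1 : HasDerivAt (fun v : ℝ => A₂ / 4 * (2 * D2 v + Real.sinh (2 * D2 v)))
        (A₂ / 4 * (2 * (-(1 / (2 * x))) + Real.cosh (2 * D2 x) * (2 * (-(1 / (2 * x)))))) x :=
      (h2D.add hsh).const_mul _
    have hg : HasDerivAt (fun v : ℝ => d₃ + d₂ - D2 v) (0 - -(1 / (2 * x))) x :=
      (hasDerivAt_const x (d₃ + d₂)).sub hD
    have hg2 : HasDerivAt (fun v : ℝ => 2 * (d₃ + d₂ - D2 v)) (2 * (0 - -(1 / (2 * x)))) x :=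
      hg.const_mul 2
    have hsh2 : HasDerivAt (fun v : ℝ => Real.sinh (2 * (d₃ + d₂ - D2 v)))
        (Real.cosh (2 * (d₃ + d₂ - D2 x)) * (2 * (0 - -(1 / (2 * x))))) x := hg2.sinh
    have p2 : HasDerivAt
        (fun v : ℝ => A₃ / 4 * (2 * (d₃ + d₂ - D2 v) + Real.sinh (2 * (d₃ + d₂ - D2 v))))
        (A₃ / 4 * (2 * (0 - -(1 / (2 * x)))
          + Real.cosh (2 * (d₃ + d₂ - D2 x)) * (2 * (0 - -(1 / (2 * x)))))) x :=
      (hg2.add hsh2).const_mul _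
    have hid : HasDerivAt (fun v : ℝ => v) 1 x := hasDerivAt_id x
    have htot := (hid.add p1).add p2
    have heq : (1 + A₂ / 4 * (2 * (-(1 / (2 * x)))
          + Real.cosh (2 * D2 x) * (2 * (-(1 / (2 * x)))))
        + A₃ / 4 * (2 * (0 - -(1 / (2 * x)))
          + Real.cosh (2 * (d₃ + d₂ - D2 x)) * (2 * (0 - -(1 / (2 * x)))))) = LDf x := by
      rw [hLDdef]; ring
    rw [hLfdef]
    exact heq ▸ htot
  -- derivative of the right branch
  have hRder : ∀ x : ℝ, 0 < x → HasDerivAt Rf (RDf x) x := by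
    intro x hx
    have hD := hD2deriv x hx
    have hE := hD3deriv x hx
    have h2D : HasDerivAt (fun v : ℝ => 2 * D2 v) (2 * (-(1 / (2 * x)))) x := hD.const_mul 2
    have hsh : HasDerivAt (fun v : ℝ => Real.sinh (2 * D2 v))
        (Real.cosh (2 * D2 x) * (2 * (-(1 / (2 * x))))) x := h2D.sinh
    have p1 : HasDerivAt (fun v : ℝ => A₂ / 4 * (2 * D2 v + Real.sinh (2 * D2 v)))
        (A₂ / 4 * (2 * (-(1 / (2 * x))) + Real.cosh (2 * D2 x) * (2 * (-(1 / (2 * x)))))) x :=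
      (h2D.add hsh).const_mul _
    have h2E : HasDerivAt (fun v : ℝ => 2 * D3 v) (2 * (-(1 / (2 * x)))) x := hE.const_mul 2
    have hsh2 : HasDerivAt (fun v : ℝ => Real.sinh (2 * D3 v))
        (Real.cosh (2 * D3 x) * (2 * (-(1 / (2 * x))))) x := h2E.sinh
    have p2 : HasDerivAt (fun v : ℝ => A₃ / 4 * (2 * D3 v + Real.sinh (2 * D3 v)))
        (A₃ / 4 * (2 * (-(1 / (2 * x))) + Real.cosh (2 * D3 x) * (2 * (-(1 / (2 * x)))))) x :=
      (h2E.add hsh2).const_mul _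
    have hid : HasDerivAt (fun v : ℝ => v) 1 x := hasDerivAt_id x
    have htot := (hid.add p1).add p2
    have heq : (1 + A₂ / 4 * (2 * (-(1 / (2 * x)))
          + Real.cosh (2 * D2 x) * (2 * (-(1 / (2 * x)))))
        + A₃ / 4 * (2 * (-(1 / (2 * x)))
          + Real.cosh (2 * D3 x) * (2 * (-(1 / (2 * x)))))) = RDf x := by
      rw [hRDdef]; ring
    rw [hRfdef]
    exact heq ▸ htot
  -- values of the depth functions at v₁ and away from it
  have hrel₂ : ∀ x : ℝ, 0 < x → D2 x = d₂ - 1 / 2 * Real.log (x / v₁) := by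
    intro x hx
    simp only [hD2def]
    have h : 2 * x / B₂ = x / v₁ * Real.exp (-2 * d₂) := by
      rw [hv₁₂]
      have he := Real.exp_ne_zero (-2 * d₂)
      field_simp
    rw [h, Real.log_mul (div_pos hx hv₁).ne' (Real.exp_ne_zero _), Real.log_exp]
    ring
  have hrel₃ : ∀ x : ℝ, 0 < x → D3 x = d₃ - 1 / 2 * Real.log (x / v₁) := by
    intro x hx
    simp only [hD3def]
    have h : 2 * x / B₃ = x / v₁ * Real.exp (-2 * d₃) := by
      rw [hv₁₃]
      have he := Real.exp_ne_zero (-2 * d₃)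
      field_simp
    rw [h, Real.log_mul (div_pos hx hv₁).ne' (Real.exp_ne_zero _), Real.log_exp]
    ring
  have hlogv₁ : Real.log (v₁ / v₁) = 0 := by rw [div_self hv₁']; exact Real.log_one
  have hD2v₁ : D2 v₁ = d₂ := by rw [hrel₂ v₁ hv₁, hlogv₁]; ring
  have hD3v₁ : D3 v₁ = d₃ := by rw [hrel₃ v₁ hv₁, hlogv₁]; ring
  -- values of the one-sided derivatives at v₁
  have hLD1 : LDf v₁ = 1 - (vt₂ - vt₃) / v₁ := by
    simp only [hLDdef]
    rw [hD2v₁, show d₃ + d₂ - d₂ = d₃ from by ring, hvt₂, hvt₃]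
    field_simp
    ring
  have hRD1 : RDf v₁ = 1 - (vt₂ + vt₃) / v₁ := by
    simp only [hRDdef]
    rw [hD2v₁, hD3v₁, hvt₂, hvt₃]
    field_simp
    ring
  constructor
  · -- local max → triangular inequalities
    intro hmax
    have hmax' : ∀ᶠ x in nhdsWithin v₁ (Set.Ioi (0 : ℝ)), V x ≤ V v₁ := hmax
    rw [nhdsWithin_eq_nhds.mpr (Ioi_mem_nhds hv₁)] at hmax'
    rw [Metric.eventually_nhds_iff] at hmax'
    obtain ⟨ε, hε, hb⟩ := hmax'
    constructor
    · -- left inequality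
      by_contra hcon
      push_neg at hcon  -- v₁ ≤ vt₂ - vt₃
      have hu0 : 0 < v₁ * Real.exp (-(2 * d₃)) := mul_pos hv₁ (Real.exp_pos _)
      have huv : v₁ * Real.exp (-(2 * d₃)) < v₁ := by
        nlinarith [Real.exp_lt_one_iff.mpr (show -(2 * d₃) < 0 by linarith)]
      have hanti : StrictAntiOn Lf (Set.Icc (v₁ * Real.exp (-(2 * d₃))) v₁) := by
        apply strictAntiOn_of_deriv_neg (convex_Icc _ _)
        · intro y hy
          have hy0 : 0 < y := lt_of_lt_of_le hu0 hy.1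
          exact ((hLder y hy0).differentiableAt.continuousAt).continuousWithinAt
        · intro y hy
          rw [interior_Icc] at hy
          have hy0 : 0 < y := hu0.trans hy.1
          rw [(hLder y hy0).deriv]
          simp only [hLDdef]
          rw [hrel₂ y hy0]
          have hq : 0 < y / v₁ := div_pos hy0 hv₁
          have hlneg : Real.log (y / v₁) < 0 := Real.log_neg hq ((div_lt_one hv₁).mpr hy.2)
          have hlgt : -(2 * d₃) < Real.log (y / v₁) := by
            rw [Real.lt_log_iff_exp_lt hq, lt_div_iff₀ hv₁]
            nlinarith [hy.1]
          have hX : Real.cosh (2 * d₂) < Real.cosh (2 * (d₂ - 1 / 2 * Real.log (y / v₁))) := by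
            rw [Real.cosh_lt_cosh, abs_of_pos (by linarith), abs_of_pos (by linarith)]
            linarith
          have hY : Real.cosh (2 * (d₃ + d₂ - (d₂ - 1 / 2 * Real.log (y / v₁))))
              < Real.cosh (2 * d₃) := by
            rw [Real.cosh_lt_cosh, abs_of_pos (by linarith), abs_of_pos (by linarith)]
            linarith
          have h2y : (0 : ℝ) < 2 * y := by linarith
          have hinv : (0 : ℝ) < 1 / (2 * y) := by positivity
          have hP : 2 * vt₂ < A₂ / 2 * (1 + Real.cosh (2 * (d₂ - 1 / 2 * Real.log (y / v₁)))) := by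
            rw [hvt₂]; nlinarith
          have hQ : A₃ / 2 * (1 + Real.cosh (2 * (d₃ + d₂ - (d₂ - 1 / 2 * Real.log (y / v₁)))))
              < 2 * vt₃ := by
            rw [hvt₃]; nlinarith
          have hPQ : 2 * y < A₂ / 2 * (1 + Real.cosh (2 * (d₂ - 1 / 2 * Real.log (y / v₁))))
              - A₃ / 2 * (1 + Real.cosh (2 * (d₃ + d₂ - (d₂ - 1 / 2 * Real.log (y / v₁))))) := by
            have := hy.2
            linarith
          have hmul := mul_lt_mul_of_pos_right hPQ hinv
          have hone : (2 * y) * (1 / (2 * y)) = 1 := by field_simp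
          nlinarith [hmul, hone]
      -- pick a point just left of v₁
      set y₀ := max ((v₁ * Real.exp (-(2 * d₃)) + v₁) / 2) (v₁ - ε / 2) with hy₀def
      have hy₀u : v₁ * Real.exp (-(2 * d₃)) < y₀ :=
        lt_of_lt_of_le (by linarith) (le_max_left _ _)
      have hy₀lt : y₀ < v₁ := max_lt (by linarith) (by linarith)
      have hy₀0 : 0 < y₀ := hu0.trans hy₀u
      have hdist : dist y₀ v₁ < ε := by
        rw [Real.dist_eq, abs_lt]
        have := le_max_right ((v₁ * Real.exp (-(2 * d₃)) + v₁) / 2) (v₁ - ε / 2)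
        constructor <;> linarith
      have hVy := hb hdist
      have hlt : Lf v₁ < Lf y₀ :=
        hanti ⟨hy₀u.le, hy₀lt.le⟩ ⟨huv.le, le_rfl⟩ hy₀lt
      rw [← hVL y₀ hy₀0 hy₀lt.le, ← hVL v₁ hv₁ le_rfl] at hlt
      linarith
    · -- right inequality
      by_contra hcon
      push_neg at hcon  -- vt₂ + vt₃ ≤ v₁
      have hm : 0 < min d₂ d₃ := lt_min hd₂ hd₃
      have hw : v₁ < v₁ * Real.exp (2 * min d₂ d₃) := by
        nlinarith [Real.one_lt_exp_iff.mpr (show (0:ℝ) < 2 * min d₂ d₃ by linarith)]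
      have hmono : StrictMonoOn Rf (Set.Icc v₁ (v₁ * Real.exp (2 * min d₂ d₃))) := by
        apply strictMonoOn_of_deriv_pos (convex_Icc _ _)
        · intro y hy
          have hy0 : 0 < y := lt_of_lt_of_le hv₁ hy.1
          exact ((hRder y hy0).differentiableAt.continuousAt).continuousWithinAt
        · intro y hy
          rw [interior_Icc] at hy
          have hy0 : 0 < y := hv₁.trans hy.1
          rw [(hRder y hy0).deriv]
          simp only [hRDdef]
          rw [hrel₂ y hy0, hrel₃ y hy0]
          have hq : 0 < y / v₁ := div_pos hy0 hv₁
          have hlpos : 0 < Real.log (y / v₁) := Real.log_pos ((one_lt_div hv₁).mpr hy.1)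
          have hllt : Real.log (y / v₁) < 2 * min d₂ d₃ := by
            rw [Real.log_lt_iff_lt_exp hq, div_lt_iff₀ hv₁]
            nlinarith [hy.2]
          have hmd₂ : min d₂ d₃ ≤ d₂ := min_le_left _ _
          have hmd₃ : min d₂ d₃ ≤ d₃ := min_le_right _ _
          have hX : Real.cosh (2 * (d₂ - 1 / 2 * Real.log (y / v₁))) < Real.cosh (2 * d₂) := by
            rw [Real.cosh_lt_cosh, abs_of_pos (by linarith), abs_of_pos (by linarith)]
            linarith
          have hY : Real.cosh (2 * (d₃ - 1 / 2 * Real.log (y / v₁))) < Real.cosh (2 * d₃) := by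
            rw [Real.cosh_lt_cosh, abs_of_pos (by linarith), abs_of_pos (by linarith)]
            linarith
          have h2y : (0 : ℝ) < 2 * y := by linarith
          have hinv : (0 : ℝ) < 1 / (2 * y) := by positivity
          have hP : A₂ / 2 * (1 + Real.cosh (2 * (d₂ - 1 / 2 * Real.log (y / v₁)))) < 2 * vt₂ := by
            rw [hvt₂]; nlinarith
          have hQ : A₃ / 2 * (1 + Real.cosh (2 * (d₃ - 1 / 2 * Real.log (y / v₁)))) < 2 * vt₃ := by
            rw [hvt₃]; nlinarith
          have hPQ : A₂ / 2 * (1 + Real.cosh (2 * (d₂ - 1 / 2 * Real.log (y / v₁))))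
              + A₃ / 2 * (1 + Real.cosh (2 * (d₃ - 1 / 2 * Real.log (y / v₁)))) < 2 * y := by
            have := hy.1
            linarith
          have hmul := mul_lt_mul_of_pos_right hPQ hinv
          have hone : (2 * y) * (1 / (2 * y)) = 1 := by field_simp
          nlinarith [hmul, hone]
      set y₀ := min ((v₁ + v₁ * Real.exp (2 * min d₂ d₃)) / 2) (v₁ + ε / 2) with hy₀def
      have hy₀gt : v₁ < y₀ := lt_min (by linarith) (by linarith)
      have hy₀w : y₀ < v₁ * Real.exp (2 * min d₂ d₃) :=
        lt_of_le_of_lt (min_le_left _ _) (by linarith)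
      have hdist : dist y₀ v₁ < ε := by
        rw [Real.dist_eq, abs_lt]
        have := min_le_right ((v₁ + v₁ * Real.exp (2 * min d₂ d₃)) / 2) (v₁ + ε / 2)
        constructor <;> linarith
      have hVy := hb hdist
      have hlt : Rf v₁ < Rf y₀ :=
        hmono ⟨le_rfl, hw.le⟩ ⟨hy₀gt.le, hy₀w.le⟩ hy₀gt
      rw [← hVR y₀ hy₀gt.le, ← hVR v₁ le_rfl] at hlt
      linarith
  · -- triangular inequalities → local max
    rintro ⟨h1, h2⟩
    -- continuity of the one-sided derivative expressions at v₁
    have hcD2 : ContinuousAt D2 v₁ := by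
      rw [hD2def]
      have h1' : ContinuousAt (fun v : ℝ => 2 * v / B₂) v₁ := by fun_prop
      have hne : 2 * v₁ / B₂ ≠ 0 := by positivity
      have h2' : ContinuousAt (fun v : ℝ => Real.log (2 * v / B₂)) v₁ :=
        h1'.log hne
      exact h2'.const_mul _
    have hcD3 : ContinuousAt D3 v₁ := by
      rw [hD3def]
      have h1' : ContinuousAt (fun v : ℝ => 2 * v / B₃) v₁ := by fun_prop
      have hne : 2 * v₁ / B₃ ≠ 0 := by positivity
      have h2' : ContinuousAt (fun v : ℝ => Real.log (2 * v / B₃)) v₁ :=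
        h1'.log hne
      exact h2'.const_mul _
    have hcinv : ContinuousAt (fun v : ℝ => 1 / (2 * v)) v₁ := by
      have h2v : ContinuousAt (fun v : ℝ => 2 * v) v₁ := by fun_prop
      exact continuousAt_const.div h2v (by positivity)
    have hc1 : ContinuousAt (fun v : ℝ => Real.cosh (2 * D2 v)) v₁ :=
      Real.continuous_cosh.continuousAt.comp (hcD2.const_mul 2)
    have hc2 : ContinuousAt (fun v : ℝ => Real.cosh (2 * (d₃ + d₂ - D2 v))) v₁ :=
      Real.continuous_cosh.continuousAt.comp ((continuousAt_const.sub hcD2).const_mul 2)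
    have hc3 : ContinuousAt (fun v : ℝ => Real.cosh (2 * D3 v)) v₁ :=
      Real.continuous_cosh.continuousAt.comp (hcD3.const_mul 2)
    have hcontL : ContinuousAt LDf v₁ := by
      rw [hLDdef]
      exact (continuousAt_const.add
        (((continuousAt_const.add hc1).const_mul _).mul hcinv.neg)).add
        (((continuousAt_const.add hc2).const_mul _).mul hcinv)
    have hcontR : ContinuousAt RDf v₁ := by
      rw [hRDdef]
      exact (continuousAt_const.add
        (((continuousAt_const.add hc1).const_mul _).mul hcinv.neg)).add
        (((continuousAt_const.add hc3).const_mul _).mul hcinv.neg)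
    have hLpos : 0 < LDf v₁ := by
      rw [hLD1, sub_pos]
      exact (div_lt_one hv₁).mpr h1
    have hRneg : RDf v₁ < 0 := by
      rw [hRD1, sub_neg]
      exact (one_lt_div hv₁).mpr h2
    have hevL : ∀ᶠ y in nhds v₁, LDf y ∈ Set.Ioi (0 : ℝ) :=
      hcontL.eventually_mem (Ioi_mem_nhds hLpos)
    have hevR : ∀ᶠ y in nhds v₁, RDf y ∈ Set.Iio (0 : ℝ) :=
      hcontR.eventually_mem (Iio_mem_nhds hRneg)
    rw [Metric.eventually_nhds_iff] at hevL hevR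
    obtain ⟨ε₁, hε₁, hb₁⟩ := hevL
    obtain ⟨ε₂, hε₂, hb₂⟩ := hevR
    set δ := min (min ε₁ ε₂) v₁ / 2 with hδdef
    have hδε₁ : δ < ε₁ := by
      have h := min_le_left ε₁ ε₂
      have h' := min_le_left (min ε₁ ε₂) v₁
      simp only [hδdef]
      linarith
    have hδε₂ : δ < ε₂ := by
      have h := min_le_right ε₁ ε₂
      have h' := min_le_left (min ε₁ ε₂) v₁
      simp only [hδdef]
      linarith
    have hδv : δ < v₁ := by
      have h' := min_le_right (min ε₁ ε₂) v₁
      simp only [hδdef]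
      linarith
    have hδ0 : 0 < δ := by
      have h1' := lt_min (lt_min hε₁ hε₂) hv₁
      simp only [hδdef]
      linarith [lt_min (lt_min hε₁ hε₂) hv₁]
    have hmono : StrictMonoOn Lf (Set.Icc (v₁ - δ) v₁) := by
      apply strictMonoOn_of_deriv_pos (convex_Icc _ _)
      · intro y hy
        have hy0 : 0 < y := by
          have := hy.1
          simp only [Set.mem_Icc] at hy
          linarith [hy.1]
        exact ((hLder y hy0).differentiableAt.continuousAt).continuousWithinAt
      · intro y hy
        rw [interior_Icc] at hy
        have hy0 : 0 < y := by linarith [hy.1]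
        rw [(hLder y hy0).deriv]
        have : dist y v₁ < ε₁ := by
          rw [Real.dist_eq, abs_lt]
          constructor <;> linarith [hy.1, hy.2]
        exact hb₁ this
    have hanti : StrictAntiOn Rf (Set.Icc v₁ (v₁ + δ)) := by
      apply strictAntiOn_of_deriv_neg (convex_Icc _ _)
      · intro y hy
        have hy0 : 0 < y := by
          simp only [Set.mem_Icc] at hy
          linarith [hy.1]
        exact ((hRder y hy0).differentiableAt.continuousAt).continuousWithinAt
      · intro y hy
        rw [interior_Icc] at hy
        have hy0 : 0 < y := by linarith [hy.1]
        rw [(hRder y hy0).deriv]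
        have : dist y v₁ < ε₂ := by
          rw [Real.dist_eq, abs_lt]
          constructor <;> linarith [hy.1, hy.2]
        exact hb₂ this
    have hfin : ∀ᶠ x in nhds v₁, V x ≤ V v₁ := by
      rw [Metric.eventually_nhds_iff]
      refine ⟨δ, hδ0, fun y hy => ?_⟩
      rw [Real.dist_eq, abs_lt] at hy
      have hy0 : 0 < y := by linarith [hy.1]
      rcases le_or_gt y v₁ with hle | hgt
      · rw [hVL y hy0 hle, hVL v₁ hv₁ le_rfl]
        rcases eq_or_lt_of_le hle with heq | hlt
        · rw [heq]
        · exact le_of_lt (hmono ⟨by linarith [hy.1], hle⟩ ⟨by linarith, le_rfl⟩ hlt)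
      · rw [hVR y hgt.le, hVR v₁ le_rfl]
        exact le_of_lt (hanti ⟨le_rfl, by linarith⟩ ⟨hgt.le, by linarith [hy.2]⟩ hgt)
    exact hfin.filter_mono nhdsWithin_le_nhds
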